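/- Let N0 ≥ 3, k ≥ 1, and n = k·N0 − 3(k−1), and let ω be an n-bit string. For i = 1, …, k, let A_i be the N0-bit substring of ω beginning at bit position (i−1)(N0−3)+1 counted from the most significant bit; equivalently A_i = ⌊ω / 2^{n − (i−1)(N0−3) − N0}⌋ mod 2^{N0} (so that S[A_i,3] = P[A_{i+1},3] for i = 1, …, k−1). Let S_1, …, S_k be N0-bit strings with D_{N0}(S_i, A_i) ≤ 1 for all i. Suppose bit strings S_k', S_{k−1}', …, S_1' and integers c_{k−1}, …, c_1 satisfy: S_k' = S_k; and for each r = k−1 down to 1, S_r' is an L_r-bit string where L_r = N0 + (k−r)(N0−3), |c_r| ≤ 2, S[S_r,3] +_3 c_r = P[S_{r+1}',3], and S_r' = (S_r +_{N0} c_r) ∘ S[S_{r+1}', L_{r+1} − 3]. Then L_1 = n and D_n(S_1', ω) = D_{N0}(S_k, A_k) ≤ 1. -/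
import Mathlib


/-- Distance `D_n(x,y) = min(|x-y|, 2^n - |x-y|)` on n-bit strings (as naturals < 2^n). -/
def D (n x y : ℕ) : ℤ := min |(x : ℤ) - (y : ℤ)| (2 ^ n - |(x : ℤ) - (y : ℤ)|)

/-- Wrap-around addition `x +_n c`: the unique natural in [0, 2^n) congruent to x + c mod 2^n. -/
def wadd (n : ℕ) (x : ℕ) (c : ℤ) : ℕ := (((x : ℤ) + c) % (2 ^ n : ℤ)).toNat

/-- `P[x,k]`: the k-bit prefix of the n-bit string x. -/
def pre (n k x : ℕ) : ℕ := x / 2 ^ (n - k)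

/-- `S[x,k]`: the k-bit suffix of x. -/
def suf (k x : ℕ) : ℕ := x % 2 ^ k

/-- Catenation of an m-bit string x with a t-bit string y. -/
def cat (t x y : ℕ) : ℕ := x * 2 ^ t + y


lemma wadd_lt (n x : ℕ) (c : ℤ) : wadd n x c < 2 ^ n := by
  have hP : ((2^n : ℕ) : ℤ) = 2^n := by push_cast; ring
  have h : (0:ℤ) < 2 ^ n := by positivity
  have h1 := Int.emod_lt_of_pos ((x:ℤ) + c) h
  have h2 := Int.emod_nonneg ((x:ℤ) + c) (by positivity : (2:ℤ)^n ≠ 0)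
  unfold wadd
  omega

lemma wadd_modeq (n x : ℕ) (c : ℤ) : (wadd n x c : ℤ) ≡ (x:ℤ) + c [ZMOD (2^n)] := by
  unfold wadd
  rw [Int.toNat_of_nonneg (Int.emod_nonneg _ (by positivity : (2:ℤ)^n ≠ 0))]
  exact Int.emod_emod_of_dvd _ dvd_rfl

lemma min_abs_helper (P X e : ℤ) (h4 : 4 ≤ P) (hX1 : -P < X) (hX2 : X < P)
    (he1 : -1 ≤ e) (he2 : e ≤ 1) (ht : X = e ∨ X = e - P ∨ X = e + P) :
    min |X| (P - |X|) = |e| := by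
  rcases abs_cases X with ⟨h1,h2⟩|⟨h1,h2⟩ <;> rcases abs_cases e with ⟨h3,h4e⟩|⟨h3,h4e⟩ <;>
    rw [h1, h3] <;> omega

lemma D_eq_abs (n x y : ℕ) (e : ℤ) (hx : x < 2^n) (hy : y < 2^n)
    (he : |e| ≤ 1) (h4 : (4:ℤ) ≤ 2^n)
    (hmod : (x:ℤ) ≡ (y:ℤ) + e [ZMOD (2^n)]) : D n x y = |e| := by
  have hx' : (x:ℤ) < 2^n := by exact_mod_cast hx
  have hy' : (y:ℤ) < 2^n := by exact_mod_cast hy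
  have hx0 : (0:ℤ) ≤ x := Int.natCast_nonneg x
  have hy0 : (0:ℤ) ≤ y := Int.natCast_nonneg y
  have habs := abs_le.mp he
  have hpos : (0:ℤ) < 2^n := by linarith
  obtain ⟨t, ht⟩ := hmod.dvd
  have hb1 : -(2^n) ≤ 2^n * t := by linarith
  have hb2 : 2^n * t ≤ 2^n := by linarith
  have ht1 : t ≤ 1 := by nlinarith
  have ht2 : -1 ≤ t := by nlinarith
  unfold D
  apply min_abs_helper _ _ _ h4 (by linarith) (by linarith) habs.1 habs.2
  interval_cases t <;> [right;left;right] <;> omega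

lemma err_of_D_le_one (n x y : ℕ) (hx : x < 2^n) (hy : y < 2^n) (h4 : (4:ℤ) ≤ 2^n)
    (hD : D n x y ≤ 1) :
    ∃ e : ℤ, |e| ≤ 1 ∧ (x:ℤ) ≡ (y:ℤ) + e [ZMOD (2^n)] ∧ D n x y = |e| := by
  have hx' : (x:ℤ) < 2^n := by exact_mod_cast hx
  have hy' : (y:ℤ) < 2^n := by exact_mod_cast hy
  have hx0 : (0:ℤ) ≤ x := Int.natCast_nonneg x
  have hy0 : (0:ℤ) ≤ y := Int.natCast_nonneg y
  by_cases h : |(x:ℤ) - y| ≤ 1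
  · refine ⟨(x:ℤ) - y, h, by rw [Int.ModEq]; ring_nf, D_eq_abs n x y _ hx hy h h4 (by rw [Int.ModEq]; ring_nf)⟩
  · push_neg at h
    unfold D at hD
    have h2 : 2^n - |(x:ℤ) - y| ≤ 1 := by
      rcases min_le_iff.mp hD with h'|h'
      · omega
      · exact h'
    rcases abs_cases ((x:ℤ) - y) with ⟨h5,h6⟩|⟨h5,h6⟩
    · refine ⟨(x:ℤ) - y - 2^n, ?_, ?_, ?_⟩
      · rw [abs_le]; omega
      · rw [Int.modEq_iff_dvd]; exact ⟨-1, by ring⟩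
      · exact D_eq_abs n x y _ hx hy (by rw [abs_le]; omega) h4 (by rw [Int.modEq_iff_dvd]; exact ⟨-1, by ring⟩)
    · refine ⟨(x:ℤ) - y + 2^n, ?_, ?_, ?_⟩
      · rw [abs_le]; omega
      · rw [Int.modEq_iff_dvd]; exact ⟨1, by ring⟩
      · exact D_eq_abs n x y _ hx hy (by rw [abs_le]; omega) h4 (by rw [Int.modEq_iff_dvd]; exact ⟨1, by ring⟩)

lemma bound_pm1 {P t : ℤ} (hP : 0 < P) (h1 : -P ≤ P * t) (h2 : P * t ≤ P) :
    -1 ≤ t ∧ t ≤ 1 := by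
  constructor
  · by_contra h; push_neg at h
    have ht : t ≤ -2 := by omega
    nlinarith
  · by_contra h; push_neg at h
    have ht : 2 ≤ t := by omega
    nlinarith

/-- correctness of the error-correction algorithm (Theorem 1 of the paper). -/
theorem stmt_15 (N0 k : ℕ) (hN0 : 3 ≤ N0) (hk : 1 ≤ k)
    (n : ℕ) (hn : n = k * N0 - 3 * (k - 1))
    (ω : ℕ) (hω : ω < 2 ^ n)
    (A : ℕ → ℕ)
    (hA : ∀ i, 1 ≤ i → i ≤ k →
      A i = ω / 2 ^ (n - (i - 1) * (N0 - 3) - N0) % 2 ^ N0)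
    (S : ℕ → ℕ) (hSlt : ∀ i, 1 ≤ i → i ≤ k → S i < 2 ^ N0)
    (hD : ∀ i, 1 ≤ i → i ≤ k → D N0 (S i) (A i) ≤ 1)
    (L : ℕ → ℕ) (hL : ∀ r, L r = N0 + (k - r) * (N0 - 3))
    (S' : ℕ → ℕ) (c : ℕ → ℤ)
    (hS'k : S' k = S k)
    (hS'lt : ∀ r, 1 ≤ r → r ≤ k - 1 → S' r < 2 ^ L r)
    (hc : ∀ r, 1 ≤ r → r ≤ k - 1 → |c r| ≤ 2)
    (hstep : ∀ r, 1 ≤ r → r ≤ k - 1 →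
      wadd 3 (suf 3 (S r)) (c r) = pre (L (r + 1)) 3 (S' (r + 1)))
    (hrec : ∀ r, 1 ≤ r → r ≤ k - 1 →
      S' r = cat (L (r + 1) - 3) (wadd N0 (S r) (c r)) (suf (L (r + 1) - 3) (S' (r + 1)))) :
    L 1 = n ∧ D n (S' 1) ω = D N0 (S k) (A k) ∧ D N0 (S k) (A k) ≤ 1 := by
  -- basic arithmetic facts
  have hmul : ∀ a b : ℕ, a ≤ b → b ≤ k → (b - a) * (N0 - 3) + a * (N0 - 3) = b * (N0 - 3) := by
    intro a b hab _; rw [← Nat.add_mul]; congr 1; omega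
  have hkN : (k - 1) * (N0 - 3) + (k - 1) * 3 = (k - 1) * N0 := by
    rw [← Nat.mul_add]; congr 1; omega
  have hkN2 : k * N0 = N0 + (k - 1) * N0 := by
    conv_lhs => rw [show k = (k-1)+1 by omega]
    rw [Nat.succ_mul]; omega
  have hkn : n = N0 + (k - 1) * (N0 - 3) := by omega
  have h4N0 : (4:ℤ) ≤ 2 ^ N0 := by
    calc (4:ℤ) ≤ 2 ^ 3 := by norm_num
    _ ≤ 2 ^ N0 := by exact pow_le_pow_right₀ (by norm_num) hN0
  have hAlt : ∀ i, 1 ≤ i → i ≤ k → A i < 2 ^ N0 := by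
    intro i h1 h2; rw [hA i h1 h2]; exact Nat.mod_lt _ (by positivity)
  -- bound on all S'
  have hS'lt' : ∀ r, 1 ≤ r → r ≤ k → S' r < 2 ^ L r := by
    intro r h1 h2
    rcases eq_or_lt_of_le h2 with rfl | hlt
    · rw [hS'k, hL]
      simpa using hSlt r h1 h2
    · exact hS'lt r h1 (by omega)
  -- error of block k
  obtain ⟨e, he1, he2, he3⟩ := err_of_D_le_one N0 (S k) (A k) (hSlt k hk le_rfl)
    (hAlt k hk le_rfl) h4N0 (hD k hk le_rfl)
  have he1' := abs_le.mp he1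
  -- A k = ω mod 2^N0
  have hAk : A k = ω % 2 ^ N0 := by
    rw [hA k hk le_rfl]
    have : n - (k - 1) * (N0 - 3) - N0 = 0 := by omega
    rw [this]
    simp
  -- main invariant
  have key : ∀ j, j ≤ k - 1 → (S' (k - j) : ℤ) ≡ (ω : ℤ) + e [ZMOD (2 ^ (L (k - j)))] := by
    intro j
    induction j with
    | zero =>
      intro _
      simp only [Nat.sub_zero]
      have hLk : L k = N0 := by rw [hL]; simp
      rw [hS'k, hLk]
      calc (S k : ℤ) ≡ (A k : ℤ) + e [ZMOD (2^N0)] := he2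
        _ ≡ (ω : ℤ) + e [ZMOD (2^N0)] := by
          apply Int.ModEq.add_right
          rw [hAk]
          push_cast
          exact (Int.emod_emod_of_dvd _ dvd_rfl)
    | succ j ih =>
      intro hj
      have hr1 : 1 ≤ k - (j+1) := by omega
      set r := k - (j + 1) with hrdef
      have hr2 : r ≤ k - 1 := by omega
      have hrj : r + 1 = k - j := by omega
      have IH := ih (by omega)
      rw [← hrj] at IH
      -- abbreviations
      set M := L (r + 1) with hMdef
      set m := M - 3 with hmdef
      have hMval : M = N0 + (k - (r+1)) * (N0 - 3) := hL (r+1)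
      have hM3 : 3 ≤ M := by omega
      have hMm : M = m + 3 := by omega
      have hLr : L r = N0 + m := by
        rw [hL]
        have h1 : (k - r) * (N0 - 3) = (k - (r+1)) * (N0 - 3) + (N0 - 3) := by
          rw [← Nat.succ_mul]  -- (a+1)*b = a*b + b
          congr 1; omega
        omega
      -- A r in terms of exponent m
      have hexp : n - (r - 1) * (N0 - 3) - N0 = m := by
        have h1 := hmul (r - 1) (k - 1) (by omega) (by omega)
        have h2 : k - 1 - (r - 1) = k - (r + 1) + 1 := by omega
        rw [h2] at h1
        have h3 : (k - (r+1) + 1) * (N0 - 3) = (k - (r+1)) * (N0-3) + (N0 - 3) := by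
          rw [Nat.succ_mul]
        omega
      have hAr : A r = ω / 2 ^ m % 2 ^ N0 := by
        rw [hA r hr1 (by omega), hexp]
      set T := wadd N0 (S r) (c r) with hTdef
      set p := S' (r+1) / 2 ^ m with hpdef
      set low := S' (r+1) % 2 ^ m with hlowdef
      have hS'r1lt : S' (r+1) < 2 ^ M := hS'lt' (r+1) (by omega) (by omega)
      have hp8 : p < 8 := by
        rw [hpdef]
        apply Nat.div_lt_of_lt_mul
        calc S' (r+1) < 2 ^ M := hS'r1lt
          _ = 2 ^ m * 8 := by rw [hMm]; ring
      have hsplit : S' (r+1) = p * 2 ^ m + low := (Nat.div_add_mod' _ _).symm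
      -- cast versions
      have hTlt := wadd_lt N0 (S r) (c r)
      have hTZ : (T:ℤ) ≡ (S r : ℤ) + c r [ZMOD (2^N0)] := wadd_modeq _ _ _
      -- from hstep : T ≡ p mod 8
      have hst := hstep r hr1 hr2
      rw [← hMdef] at hst
      have hpre : pre M 3 (S' (r+1)) = p := by
        rw [pre, ← hmdef, hpdef]
      rw [hpre] at hst
      have hTp : (T:ℤ) ≡ (p:ℤ) [ZMOD 8] := by
        have h8 : ((2:ℤ)^3) = 8 := by norm_num
        have hw : (wadd 3 (suf 3 (S r)) (c r) : ℤ) ≡ ((suf 3 (S r) : ℕ) : ℤ) + c r [ZMOD 8] := by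
          rw [← h8]; exact wadd_modeq _ _ _
        have hsuf : ((suf 3 (S r) : ℕ) : ℤ) ≡ (S r : ℤ) [ZMOD 8] := by
          rw [suf]
          have hc8 : ((S r % 2^3 : ℕ) : ℤ) = (S r : ℤ) % 8 := by push_cast; norm_num
          rw [hc8]
          exact Int.emod_emod_of_dvd _ dvd_rfl
        have h1 : ((p:ℕ) : ℤ) ≡ (S r : ℤ) + c r [ZMOD 8] := by
          rw [← hst]
          exact hw.trans (Int.ModEq.add_right _ hsuf)
        have h2 : (T:ℤ) ≡ (S r : ℤ) + c r [ZMOD 8] := by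
          apply Int.ModEq.of_dvd _ hTZ
          rw [← h8]
          exact_mod_cast pow_dvd_pow (2:ℤ) hN0
        exact h2.trans h1.symm
      -- error of block r
      obtain ⟨er, her1, her2, _⟩ := err_of_D_le_one N0 (S r) (A r) (hSlt r hr1 (by omega))
        (hAlt r hr1 (by omega)) h4N0 (hD r hr1 (by omega))
      have her1' := abs_le.mp her1
      have hcr := abs_le.mp (hc r hr1 hr2)
      -- split ω
      set u := ω / 2 ^ m with hudef
      set v := ω % 2 ^ m with hvdef
      have hωsplit : ω = u * 2 ^ m + v := (Nat.div_add_mod' _ _).symm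
      have hvlt : v < 2 ^ m := Nat.mod_lt _ (by positivity)
      have hlowlt : low < 2 ^ m := Nat.mod_lt _ (by positivity)
      -- IH in the split form
      have hIH2 : ((p:ℤ) * 2^m + low) ≡ ((u:ℤ) * 2^m + v + e) [ZMOD (2^M)] := by
        calc ((p:ℤ) * 2^m + low) = ((S' (r+1) : ℕ) : ℤ) := by rw [hsplit]; push_cast; ring
          _ ≡ (ω:ℤ) + e [ZMOD (2^M)] := IH
          _ = (u:ℤ) * 2^m + v + e := by rw [hωsplit]; push_cast; ring
      -- derive d = ε * 2^m
      have hdvdM : (2:ℤ)^M ∣ ((u:ℤ) * 2^m + v + e) - ((p:ℤ) * 2^m + low) := hIH2.dvd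
      have hmdvdM : (2:ℤ)^m ∣ (2:ℤ)^M := pow_dvd_pow 2 (by omega)
      have hddvd : (2:ℤ)^m ∣ ((v:ℤ) + e - low) := by
        have h1 : (2:ℤ)^m ∣ ((u:ℤ) * 2^m + v + e) - ((p:ℤ) * 2^m + low) :=
          dvd_trans hmdvdM hdvdM
        have h2 : ((v:ℤ) + e - low) =
            (((u:ℤ) * 2^m + v + e) - ((p:ℤ) * 2^m + low)) - ((u:ℤ) - p) * 2^m := by ring
        rw [h2]
        exact dvd_sub h1 ⟨(u:ℤ) - p, by ring⟩
      obtain ⟨ε, hε⟩ := hddvd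
      have hm0 : (0:ℤ) < 2^m := by positivity
      have hv' : (v:ℤ) < 2^m := by exact_mod_cast hvlt
      have hlow' : (low:ℤ) < 2^m := by exact_mod_cast hlowlt
      have hv0 : (0:ℤ) ≤ v := Int.natCast_nonneg v
      have hlow0 : (0:ℤ) ≤ low := Int.natCast_nonneg low
      obtain ⟨hε2, hε1⟩ := bound_pm1 hm0 (by linarith) (by linarith)
      -- 8 divides u - p + ε
      have h2M : (2:ℤ)^M = 2^m * 8 := by rw [hMm, pow_add]; norm_num
      have h8dvd : (8:ℤ) ∣ ((u:ℤ) - p + ε) := by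
        have hid : (2:ℤ)^m * ((u:ℤ) - p + ε) =
            ((u:ℤ) * 2^m + v + e) - ((p:ℤ) * 2^m + low) := by linear_combination -hε
        have h1 : (2:ℤ)^m * 8 ∣ 2^m * ((u:ℤ) - p + ε) := by
          rw [← h2M, hid]; exact hdvdM
        exact (mul_dvd_mul_iff_left hm0.ne').mp h1
      -- A r ≡ u
      have hAru : (A r : ℤ) ≡ (u:ℤ) [ZMOD (2^N0)] := by
        have hcast : ((u % 2^N0 : ℕ) : ℤ) = (u:ℤ) % 2^N0 := by push_cast; ring
        rw [hAr, hcast]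
        exact Int.emod_emod_of_dvd _ dvd_rfl
      have hTu : (T:ℤ) ≡ (u:ℤ) + er + c r [ZMOD (2^N0)] := by
        calc (T:ℤ) ≡ (S r : ℤ) + c r [ZMOD (2^N0)] := hTZ
          _ ≡ ((A r : ℤ) + er) + c r [ZMOD (2^N0)] := her2.add_right _
          _ ≡ ((u:ℤ) + er) + c r [ZMOD (2^N0)] := (hAru.add_right er).add_right _
          _ = (u:ℤ) + er + c r := by ring
      have h8N0 : (8:ℤ) ∣ 2^N0 := by
        rw [show (8:ℤ) = 2^3 by norm_num]
        exact pow_dvd_pow 2 hN0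
      have hTu8 : (T:ℤ) ≡ (u:ℤ) + er + c r [ZMOD 8] := Int.ModEq.of_dvd h8N0 hTu
      have hpuε : (p:ℤ) ≡ (u:ℤ) + ε [ZMOD 8] := by
        rw [Int.modEq_iff_dvd, show ((u:ℤ) + ε) - (p:ℤ) = (u:ℤ) - p + ε by ring]
        exact h8dvd
      -- conclude ε = er + c r
      have hεval : ε = er + c r := by
        have hcong : ((u:ℤ) + er + c r) ≡ (u:ℤ) + ε [ZMOD 8] :=
          (hTu8.symm.trans hTp).trans hpuε
        have hdvd8 : (8:ℤ) ∣ ((u:ℤ) + ε) - ((u:ℤ) + er + c r) := hcong.dvd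
        obtain ⟨w, hw⟩ := hdvd8
        have hw' : ε - er - c r = 8 * w := by linarith
        omega
      have hTfin : (T:ℤ) - ε ≡ (u:ℤ) [ZMOD (2^N0)] := by
        have h1 : (T:ℤ) ≡ (u:ℤ) + ε [ZMOD (2^N0)] := by
          rw [show ((u:ℤ) + ε) = (u:ℤ) + er + c r by omega]
          exact hTu
        have := h1.sub_right ε
        simpa using this
      -- final assembly of the step
      have hS'r : (S' r : ℤ) = (T:ℤ) * 2^m + low := by
        rw [hrec r hr1 hr2, ← hMdef]
        rw [cat, suf, ← hmdef, ← hTdef, ← hlowdef]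
        push_cast
        ring
      have hlowval : (low:ℤ) = (v:ℤ) + e - 2^m * ε := by linarith
      rw [hLr, pow_add]
      calc (S' r : ℤ) = ((T:ℤ) - ε) * 2^m + ((v:ℤ) + e) := by
            rw [hS'r, hlowval]; ring
        _ ≡ (u:ℤ) * 2^m + ((v:ℤ) + e) [ZMOD (2^N0 * 2^m)] :=
            (hTfin.mul_right' ).add_right _
        _ = (ω:ℤ) + e := by rw [hωsplit]; push_cast; ring
  -- conclude
  have hL1 : L 1 = n := by rw [hL]; omega
  have hfin := key (k-1) le_rfl
  have hk1 : k - (k - 1) = 1 := by omega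
  rw [hk1] at hfin
  have hS'1lt : S' 1 < 2 ^ n := by rw [← hL1]; exact hS'lt' 1 le_rfl hk
  rw [hL1] at hfin
  have h4n : (4:ℤ) ≤ 2^n := le_trans h4N0 (pow_le_pow_right₀ (by norm_num) (by omega))
  refine ⟨hL1, ?_, ?_⟩
  · rw [D_eq_abs n (S' 1) ω e hS'1lt hω he1 h4n hfin, he3]
  · rw [he3]; exact he1
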